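/- The local boolean rank of the n×n lower-triangular all-ones matrix T_n satisfies lr_B(T_n) = (1/2)·log₂ n + (1/4)·log₂ log₂ n + O(1); in particular there exist constants c₁, c₂ with (1/2)log₂ n + (1/4)log₂ log₂ n − c₁ ≤ lr_B(T_n) ≤ (1/2)log₂ n + (1/4)log₂ log₂ n + c₂ for all n ≥ 2. -/

import Mathlib

open Finset

/-- A rectangle covering of the lower-triangular all-ones `n × n` matrix `T_n`:
a family of rectangles (pairs of a row set and a column set) which are all-ones
(every row index is ≥ every column index) and cover every entry `(i,j)` with `i ≥ j`. -/
def TriCover (n : ℕ) (F : Finset (Finset (Fin n) × Finset (Fin n))) : Prop :=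
  (∀ p ∈ F, ∀ i ∈ p.1, ∀ j ∈ p.2, (j : ℕ) ≤ (i : ℕ)) ∧
  ∀ i j : Fin n, (j : ℕ) ≤ (i : ℕ) → ∃ p ∈ F, i ∈ p.1 ∧ j ∈ p.2

/-- The number of rectangles of `F` meeting row `i`. -/
def rowVal {n : ℕ} (F : Finset (Finset (Fin n) × Finset (Fin n))) (i : Fin n) : ℕ :=
  (F.filter (fun p => i ∈ p.1)).card

/-- The number of rectangles of `F` meeting column `j`. -/
def colVal {n : ℕ} (F : Finset (Finset (Fin n) × Finset (Fin n))) (j : Fin n) : ℕ :=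
  (F.filter (fun p => j ∈ p.2)).card

/-- `trif r s` is the maximum `n` such that `T_n` admits a rectangle covering with
row valency at most `r` and column valency at most `s`. -/
noncomputable def trif (r s : ℕ) : ℕ :=
  sSup {n | ∃ F : Finset (Finset (Fin n) × Finset (Fin n)), TriCover n F ∧
    (∀ i : Fin n, rowVal F i ≤ r) ∧ ∀ j : Fin n, colVal F j ≤ s}

/-- The local boolean rank of `T_n`: the least `k` such that `T_n` admits a rectangle
covering in which every row and every column meets at most `k` rectangles. -/
noncomputable def lrB (n : ℕ) : ℕ :=
  sInf {k | ∃ F : Finset (Finset (Fin n) × Finset (Fin n)), TriCover n F ∧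
    (∀ i : Fin n, rowVal F i ≤ k) ∧ ∀ j : Fin n, colVal F j ≤ k}

open Polynomial in
lemma skew_bollobas {a b N : ℕ} (A B : Fin N → Finset ℕ)
    (hA : ∀ i, (A i).card ≤ a) (hB : ∀ i, (B i).card ≤ b)
    (hdiag : ∀ i, Disjoint (A i) (B i))
    (hskew : ∀ i j : Fin N, j < i → ((A j) ∩ (B i)).Nonempty) :
    N ≤ (a + b).choose a := by
  classical
  set t : ℕ → ℝ := fun z => (z : ℝ) + 1 with ht
  have tinj : Function.Injective t := by
    intro x y h; simpa [ht] using h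
  have tpos : ∀ z, 0 < t z := by intro z; positivity
  set P : Fin N → Polynomial ℝ := fun i => ∏ z ∈ B i, (X - C (t z)) with hP
  have hdeg : ∀ i, (P i).natDegree < b + 1 := by
    intro i
    have h1 : (P i).natDegree ≤ ∑ z ∈ B i, (X - C (t z)).natDegree :=
      Polynomial.natDegree_prod_le _ _
    have h2 : ∑ z ∈ B i, (X - C (t z)).natDegree = (B i).card := by
      simp [Polynomial.natDegree_X_sub_C]
    have := hB i; omega
  -- evaluation facts
  have heval0 : ∀ i w, w ∈ B i → (P i).eval (t w) = 0 := by
    intro i w hw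
    rw [hP]
    simp only [Polynomial.eval_prod]
    exact Finset.prod_eq_zero hw (by simp)
  have hevalne : ∀ (i : Fin N) (x : ℝ), (x = 0 ∨ ∃ w ∉ B i, x = t w) →
      (P i).eval x ≠ 0 := by
    intro i x hx
    rw [hP]
    simp only [Polynomial.eval_prod]
    apply Finset.prod_ne_zero_iff.2
    intro z hz
    simp only [Polynomial.eval_sub, Polynomial.eval_X, Polynomial.eval_C, sub_ne_zero]
    rcases hx with rfl | ⟨w, hw, rfl⟩
    · exact fun h => (tpos z).ne' h.symm
    · exact fun h => hw (tinj h ▸ hz)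
  -- padded point tuples
  set y : Fin N → Fin a → ℝ := fun j m => (((A j).toList.map t).getD m 0) with hy
  have hy1 : ∀ (j : Fin N) (w : ℕ), w ∈ A j → ∃ m : Fin a, y j m = t w := by
    intro j w hw
    have hw' : t w ∈ (A j).toList.map t := List.mem_map_of_mem (f := t) (Finset.mem_toList.2 hw)
    obtain ⟨m, hm, hget⟩ := List.mem_iff_getElem.1 hw'
    have hlen : ((A j).toList.map t).length = (A j).card := by
      simp [Finset.length_toList]
    refine ⟨⟨m, lt_of_lt_of_le (hlen ▸ hm) (hA j)⟩, ?_⟩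
    rw [hy]
    simp only
    rw [List.getD_eq_getElem _ _ (by simpa using hm)]
    exact hget
  have hy2 : ∀ (j : Fin N) (m : Fin a), y j m = 0 ∨ ∃ w ∈ A j, y j m = t w := by
    intro j m
    by_cases hm : (m : ℕ) < ((A j).toList.map t).length
    · right
      rw [hy]; simp only
      rw [List.getD_eq_getElem _ _ hm]
      have : ((A j).toList.map t)[(m:ℕ)] ∈ (A j).toList.map t := List.getElem_mem _
      obtain ⟨w, hw, hww⟩ := List.mem_map.1 this
      exact ⟨w, Finset.mem_toList.1 hw, hww.symm⟩
    · left
      rw [hy]; simp only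
      exact List.getD_eq_default _ _ (le_of_not_gt hm)
  set M : Fin N → Fin N → ℝ := fun i j => ∏ m : Fin a, (P i).eval (y j m) with hM
  have hM0 : ∀ i j, j < i → M i j = 0 := by
    intro i j hij
    obtain ⟨w, hw⟩ := hskew i j hij
    obtain ⟨hwA, hwB⟩ := Finset.mem_inter.1 hw
    obtain ⟨m, hm⟩ := hy1 j w hwA
    exact Finset.prod_eq_zero (Finset.mem_univ m) (by rw [hm]; exact heval0 i w hwB)
  have hMdiag : ∀ i, M i i ≠ 0 := by
    intro i
    apply Finset.prod_ne_zero_iff.2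
    intro m _
    apply hevalne
    rcases hy2 i m with h | ⟨w, hw, hww⟩
    · exact Or.inl h
    · exact Or.inr ⟨w, fun hwB => (Finset.disjoint_left.1 (hdiag i)) hw hwB, hww⟩
  -- expansion into Sym-indexed bilinear form
  set c : Fin N → Fin (b+1) → ℝ := fun i d => (P i).coeff d with hc
  set cl : (Fin a → Fin (b+1)) → Sym (Fin (b+1)) a :=
    fun d => ⟨Finset.univ.val.map d, by simp⟩ with hcl
  set U : Fin N → Sym (Fin (b+1)) a → ℝ :=
    fun i σ => (σ.val.map (c i)).prod with hU
  set V : Fin N → Sym (Fin (b+1)) a → ℝ :=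
    fun j σ => ∑ d ∈ Finset.univ.filter (fun d : Fin a → Fin (b+1) => cl d = σ),
      ∏ m : Fin a, (y j m) ^ (d m : ℕ) with hV
  have hUcl : ∀ i (d : Fin a → Fin (b+1)), U i (cl d) = ∏ m : Fin a, c i (d m) := by
    intro i d
    rw [hU, hcl]
    simp only
    rw [Multiset.map_map]
    rfl
  have hexp : ∀ i j, M i j = ∑ σ : Sym (Fin (b+1)) a, U i σ * V j σ := by
    intro i j
    have e1 : ∀ m : Fin a, (P i).eval (y j m)
        = ∑ d : Fin (b+1), c i d * (y j m) ^ (d : ℕ) := by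
      intro m
      rw [Polynomial.eval_eq_sum_range' (hdeg i), Fin.sum_univ_eq_sum_range
        (fun d => (P i).coeff d * (y j m) ^ d)]
    calc M i j = ∏ m : Fin a, ∑ d : Fin (b+1), c i d * (y j m) ^ (d : ℕ) := by
          rw [hM]; exact Finset.prod_congr rfl (fun m _ => e1 m)
    _ = ∑ D ∈ Fintype.piFinset (fun _ : Fin a => (Finset.univ : Finset (Fin (b+1)))),
          ∏ m : Fin a, (c i (D m) * (y j m) ^ (D m : ℕ)) :=
        Finset.prod_univ_sum _ _
    _ = ∑ D : Fin a → Fin (b+1), (∏ m : Fin a, c i (D m)) * ∏ m : Fin a, (y j m) ^ (D m : ℕ) := by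
        rw [Fintype.piFinset_univ]
        exact Finset.sum_congr rfl (fun D _ => Finset.prod_mul_distrib)
    _ = ∑ σ : Sym (Fin (b+1)) a, ∑ D ∈ Finset.univ.filter (fun D => cl D = σ),
          (∏ m : Fin a, c i (D m)) * ∏ m : Fin a, (y j m) ^ (D m : ℕ) := by
        rw [Finset.sum_fiberwise_eq_sum_filter]
        simp
    _ = ∑ σ : Sym (Fin (b+1)) a, U i σ * V j σ := by
        refine Finset.sum_congr rfl (fun σ _ => ?_)
        rw [hV]
        simp only
        rw [Finset.mul_sum]
        refine Finset.sum_congr rfl (fun D hD => ?_)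
        rw [← (Finset.mem_filter.1 hD).2, hUcl]
  -- linear independence
  have hli : LinearIndependent ℝ U := by
    rw [linearIndependent_iff']
    intro s g hg
    have hUzero : ∀ σ, ∑ i ∈ s, g i * U i σ = 0 := by
      intro σ
      have : (∑ i ∈ s, g i • U i) σ = ∑ i ∈ s, g i * U i σ := by
        simp [Finset.sum_apply]
      rw [← this, hg]
      simp
    have key : ∀ j : Fin N, ∑ i ∈ s, g i * M i j = 0 := by
      intro j
      have hswap : ∑ i ∈ s, g i * M i j
          = ∑ σ : Sym (Fin (b+1)) a, (∑ i ∈ s, g i * U i σ) * V j σ := by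
        simp_rw [hexp, Finset.mul_sum]
        rw [Finset.sum_comm]
        simp_rw [Finset.sum_mul, mul_assoc]
      rw [hswap]
      simp [hUzero]
    suffices h : ∀ m : ℕ, ∀ i ∈ s, (i : ℕ) = m → g i = 0 by
      intro i his; exact h i i his rfl
    intro m
    induction m using Nat.strong_induction_on with
    | _ m IH =>
      intro i his him
      have hsum := key i
      have hone : ∑ i' ∈ s, g i' * M i' i = g i * M i i := by
        apply Finset.sum_eq_single_of_mem i his
        intro i' his' hne
        rcases lt_or_gt_of_ne hne with hlt | hgt
        · have : (i' : ℕ) < m := him ▸ hlt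
          rw [IH (i' : ℕ) this i' his' rfl, zero_mul]
        · rw [hM0 i' i hgt, mul_zero]
      rw [hone] at hsum
      exact (mul_eq_zero.1 hsum).resolve_right (hMdiag i)
  have := hli.fintype_card_le_finrank
  rw [Module.finrank_pi] at this
  simp only [Fintype.card_fin] at this
  rw [Sym.card_sym_eq_multichoose, Nat.multichoose_eq, Fintype.card_fin] at this
  have harith : b + 1 + a - 1 = a + b := by omega
  rwa [harith] at this



lemma rowVal_union_le {n : ℕ} (F G : Finset (Finset (Fin n) × Finset (Fin n))) (i : Fin n) :
    rowVal (F ∪ G) i ≤ rowVal F i + rowVal G i := by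
  unfold rowVal; rw [Finset.filter_union]; exact Finset.card_union_le _ _

lemma colVal_union_le {n : ℕ} (F G : Finset (Finset (Fin n) × Finset (Fin n))) (j : Fin n) :
    colVal (F ∪ G) j ≤ colVal F j + colVal G j := by
  unfold colVal; rw [Finset.filter_union]; exact Finset.card_union_le _ _

lemma rowVal_insert_le {n : ℕ} (F : Finset (Finset (Fin n) × Finset (Fin n))) (q) (i : Fin n) :
    rowVal (insert q F) i ≤ rowVal F i + (if i ∈ q.1 then 1 else 0) := by
  unfold rowVal; rw [Finset.filter_insert]
  split
  · exact Finset.card_insert_le _ _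
  · simp

lemma colVal_insert_le {n : ℕ} (F : Finset (Finset (Fin n) × Finset (Fin n))) (q) (j : Fin n) :
    colVal (insert q F) j ≤ colVal F j + (if j ∈ q.2 then 1 else 0) := by
  unfold colVal; rw [Finset.filter_insert]
  split
  · exact Finset.card_insert_le _ _
  · simp

lemma exists_cover (n : ℕ) : ∀ r s : ℕ, n + 1 ≤ (r + s).choose r →
    ∃ F : Finset (Finset (Fin n) × Finset (Fin n)), TriCover n F ∧
      (∀ i, rowVal F i ≤ r) ∧ (∀ j, colVal F j ≤ s) := by
  induction n using Nat.strong_induction_on with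
  | _ n IH =>
    intro r s hn
    rcases Nat.eq_zero_or_pos n with rfl | hpos
    · exact ⟨∅, ⟨by simp, fun i => i.elim0⟩, fun i => i.elim0, fun j => j.elim0⟩
    · have hr : 1 ≤ r := by
        by_contra h
        have : r = 0 := by omega
        subst this
        simp [Nat.choose_zero_right] at hn
        omega
      have hs : 1 ≤ s := by
        by_contra h
        have : s = 0 := by omega
        subst this
        simp [Nat.choose_self] at hn
        omega
      have harg : r + (s - 1) = r + s - 1 := by omega
      have harg2 : (r - 1) + s = r + s - 1 := by omega
      have hpascal : (r + s).choose r = (r + s - 1).choose (r - 1) + (r + s - 1).choose r := by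
        obtain ⟨r', rfl⟩ : ∃ r', r = r' + 1 := ⟨r - 1, by omega⟩
        obtain ⟨s', rfl⟩ : ∃ s', s = s' + 1 := ⟨s - 1, by omega⟩
        have h1 : r' + 1 + (s' + 1) = (r' + (s' + 1)) + 1 := by omega
        have e1 : r' + 1 + (s' + 1) - 1 = r' + (s' + 1) := by omega
        have e2 : r' + 1 - 1 = r' := by omega
        rw [h1, Nat.choose_succ_succ]
        have e3 : r' + (s' + 1) + 1 - 1 = r' + (s' + 1) := by omega
        rw [e3, e2]
      have hctpos : 0 < (r + s - 1).choose r := Nat.choose_pos (by omega)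
      have hcbpos : 0 < (r + s - 1).choose (r - 1) := Nat.choose_pos (by omega)
      set a := (r + s - 1).choose r - 1 with ha
      set p := min a (n - 1) with hp
      have hple : p ≤ n - 1 := min_le_right _ _
      have hpa : p ≤ a := min_le_left _ _
      have hpcase : p = a ∨ p = n - 1 := by
        rcases min_cases a (n-1) with ⟨h, _⟩ | ⟨h, _⟩
        · left; exact h
        · right; exact h
      have htop : p + 1 ≤ (r + (s - 1)).choose r := by rw [harg]; omega
      have hbot : (n - 1 - p) + 1 ≤ ((r - 1) + s).choose (r - 1) := by rw [harg2]; omega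
      obtain ⟨Ft, hFt, hFtr, hFts⟩ := IH p (by omega) r (s - 1) htop
      obtain ⟨Fb, hFb, hFbr, hFbs⟩ := IH (n - 1 - p) (by omega) (r - 1) s hbot
      -- embeddings
      have hppn : p < n := by omega
      set topF : Fin p → Fin n := fun x => ⟨x, by omega⟩ with htopF
      set botF : Fin (n - 1 - p) → Fin n := fun x => ⟨p + 1 + x, by omega⟩ with hbotF
      set mapT : (Finset (Fin p) × Finset (Fin p)) → (Finset (Fin n) × Finset (Fin n)) :=
        fun q => (q.1.image topF, q.2.image topF) with hmapT
      set mapB : (Finset (Fin (n-1-p)) × Finset (Fin (n-1-p))) → (Finset (Fin n) × Finset (Fin n)) :=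
        fun q => (q.1.image botF, q.2.image botF) with hmapB
      set big : Finset (Fin n) × Finset (Fin n) :=
        (Finset.univ.filter (fun i : Fin n => p ≤ (i : ℕ)),
         Finset.univ.filter (fun j : Fin n => (j : ℕ) ≤ p)) with hbig
      classical
      set F : Finset (Finset (Fin n) × Finset (Fin n)) :=
        insert big ((Ft.image mapT) ∪ (Fb.image mapB)) with hF
      -- membership characterizations
      have hmemT1 : ∀ q (i : Fin n), i ∈ (mapT q).1 → ∃ x : Fin p, x ∈ q.1 ∧ (i : ℕ) = (x : ℕ) := by
        intro q i hi
        rw [hmapT] at hi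
        obtain ⟨x, hx, rfl⟩ := Finset.mem_image.1 hi
        exact ⟨x, hx, rfl⟩
      have hmemT2 : ∀ q (j : Fin n), j ∈ (mapT q).2 → ∃ x : Fin p, x ∈ q.2 ∧ (j : ℕ) = (x : ℕ) := by
        intro q j hj
        rw [hmapT] at hj
        obtain ⟨x, hx, rfl⟩ := Finset.mem_image.1 hj
        exact ⟨x, hx, rfl⟩
      have hmemB1 : ∀ q (i : Fin n), i ∈ (mapB q).1 →
          ∃ x : Fin (n-1-p), x ∈ q.1 ∧ (i : ℕ) = p + 1 + (x : ℕ) := by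
        intro q i hi
        rw [hmapB] at hi
        obtain ⟨x, hx, rfl⟩ := Finset.mem_image.1 hi
        exact ⟨x, hx, rfl⟩
      have hmemB2 : ∀ q (j : Fin n), j ∈ (mapB q).2 →
          ∃ x : Fin (n-1-p), x ∈ q.2 ∧ (j : ℕ) = p + 1 + (x : ℕ) := by
        intro q j hj
        rw [hmapB] at hj
        obtain ⟨x, hx, rfl⟩ := Finset.mem_image.1 hj
        exact ⟨x, hx, rfl⟩
      refine ⟨F, ⟨?_, ?_⟩, ?_, ?_⟩
      · -- all ones
        intro q hq i hi j hj
        rw [hF] at hq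
        rcases Finset.mem_insert.1 hq with rfl | hq
        · rw [hbig] at hi hj
          simp only [Finset.mem_filter] at hi hj
          omega
        · rcases Finset.mem_union.1 hq with hq | hq
          · obtain ⟨q0, hq0, rfl⟩ := Finset.mem_image.1 hq
            obtain ⟨x, hx, hxe⟩ := hmemT1 q0 i hi
            obtain ⟨z, hz, hze⟩ := hmemT2 q0 j hj
            have := hFt.1 q0 hq0 x hx z hz
            omega
          · obtain ⟨q0, hq0, rfl⟩ := Finset.mem_image.1 hq
            obtain ⟨x, hx, hxe⟩ := hmemB1 q0 i hi
            obtain ⟨z, hz, hze⟩ := hmemB2 q0 j hj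
            have := hFb.1 q0 hq0 x hx z hz
            omega
      · -- coverage
        intro i j hij
        by_cases hi : (i : ℕ) < p
        · have hjp : (j : ℕ) < p := by omega
          obtain ⟨q, hq, hqi, hqj⟩ := hFt.2 ⟨i, hi⟩ ⟨j, hjp⟩ hij
          refine ⟨mapT q, ?_, ?_, ?_⟩
          · rw [hF]; exact Finset.mem_insert_of_mem (Finset.mem_union_left _ (Finset.mem_image_of_mem _ hq))
          · rw [hmapT]
            refine Finset.mem_image.2 ⟨⟨i, hi⟩, hqi, ?_⟩
            rw [htopF]
          · rw [hmapT]
            refine Finset.mem_image.2 ⟨⟨j, hjp⟩, hqj, ?_⟩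
            rw [htopF]
        · by_cases hj : (j : ℕ) ≤ p
          · refine ⟨big, ?_, ?_, ?_⟩
            · rw [hF]; exact Finset.mem_insert_self _ _
            · rw [hbig]; simp; omega
            · rw [hbig]; simp; omega
          · have hi' : (i : ℕ) - (p + 1) < n - 1 - p := by omega
            have hj' : (j : ℕ) - (p + 1) < n - 1 - p := by omega
            obtain ⟨q, hq, hqi, hqj⟩ := hFb.2 ⟨(i : ℕ) - (p+1), hi'⟩ ⟨(j : ℕ) - (p+1), hj'⟩ (by simp; omega)
            refine ⟨mapB q, ?_, ?_, ?_⟩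
            · rw [hF]; exact Finset.mem_insert_of_mem (Finset.mem_union_right _ (Finset.mem_image_of_mem _ hq))
            · rw [hmapB]
              refine Finset.mem_image.2 ⟨_, hqi, ?_⟩
              rw [hbotF]; apply Fin.ext; simp; omega
            · rw [hmapB]
              refine Finset.mem_image.2 ⟨_, hqj, ?_⟩
              rw [hbotF]; apply Fin.ext; simp; omega
      · -- row valencies
        intro i
        have hins := rowVal_insert_le ((Ft.image mapT) ∪ (Fb.image mapB)) big i
        have huni := rowVal_union_le (Ft.image mapT) (Fb.image mapB) i
        have hT : rowVal (Ft.image mapT) i ≤ if h : (i:ℕ) < p then rowVal Ft ⟨i, h⟩ else 0 := by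
          split
          · rename_i h
            unfold rowVal
            apply le_trans (Finset.card_le_card ?_) (Finset.card_image_le (f := mapT))
            intro q' hq'
            rw [Finset.mem_filter] at hq'
            obtain ⟨hq'm, hq'i⟩ := hq'
            obtain ⟨q0, hq0, rfl⟩ := Finset.mem_image.1 hq'm
            obtain ⟨x, hx, hxe⟩ := hmemT1 q0 i hq'i
            have hxi : x = ⟨i, h⟩ := by apply Fin.ext; show (x:ℕ) = (i:ℕ); omega
            refine Finset.mem_image_of_mem _ (Finset.mem_filter.2 ⟨hq0, ?_⟩)
            rw [← hxi]; exact hx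
          · rename_i h
            unfold rowVal
            rw [Nat.le_zero, Finset.card_eq_zero, Finset.filter_eq_empty_iff]
            intro q' hq'
            obtain ⟨q0, hq0, rfl⟩ := Finset.mem_image.1 hq'
            intro hq'i
            obtain ⟨x, hx, hxe⟩ := hmemT1 q0 i hq'i
            have : (x : ℕ) < p := x.2
            omega
        have hB : rowVal (Fb.image mapB) i ≤
            if h : p + 1 ≤ (i:ℕ) then rowVal Fb ⟨(i:ℕ) - (p+1), by omega⟩ else 0 := by
          split
          · rename_i h
            unfold rowVal
            apply le_trans (Finset.card_le_card ?_) (Finset.card_image_le (f := mapB))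
            intro q' hq'
            rw [Finset.mem_filter] at hq'
            obtain ⟨hq'm, hq'i⟩ := hq'
            obtain ⟨q0, hq0, rfl⟩ := Finset.mem_image.1 hq'm
            obtain ⟨x, hx, hxe⟩ := hmemB1 q0 i hq'i
            have hxi : x = ⟨(i:ℕ) - (p+1), by omega⟩ := by
              apply Fin.ext; show (x:ℕ) = (i:ℕ) - (p+1); omega
            refine Finset.mem_image_of_mem _ (Finset.mem_filter.2 ⟨hq0, ?_⟩)
            rw [← hxi]; exact hx
          · rename_i h
            unfold rowVal
            rw [Nat.le_zero, Finset.card_eq_zero, Finset.filter_eq_empty_iff]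
            intro q' hq'
            obtain ⟨q0, hq0, rfl⟩ := Finset.mem_image.1 hq'
            intro hq'i
            obtain ⟨x, hx, hxe⟩ := hmemB1 q0 i hq'i
            omega
        have hbigrow : (if i ∈ big.1 then 1 else 0) = if p ≤ (i:ℕ) then 1 else 0 := by
          rw [hbig]; simp
        rw [hF]
        refine le_trans hins ?_
        rw [hbigrow]
        by_cases h1 : (i : ℕ) < p
        · have := hFtr ⟨i, h1⟩
          simp only [dif_pos h1] at hT
          simp only [dif_neg (by omega : ¬ (p + 1 ≤ (i:ℕ)))] at hB
          rw [if_neg (by omega)]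
          omega
        · by_cases h2 : p + 1 ≤ (i : ℕ)
          · have := hFbr ⟨(i:ℕ) - (p+1), by omega⟩
            simp only [dif_neg (by omega : ¬ (i:ℕ) < p)] at hT
            simp only [dif_pos h2] at hB
            rw [if_pos (by omega)]
            omega
          · simp only [dif_neg h1] at hT
            simp only [dif_neg h2] at hB
            rw [if_pos (by omega)]
            omega
      · -- column valencies
        intro j
        have hins := colVal_insert_le ((Ft.image mapT) ∪ (Fb.image mapB)) big j
        have huni := colVal_union_le (Ft.image mapT) (Fb.image mapB) j
        have hT : colVal (Ft.image mapT) j ≤ if h : (j:ℕ) < p then colVal Ft ⟨j, h⟩ else 0 := by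
          split
          · rename_i h
            unfold colVal
            apply le_trans (Finset.card_le_card ?_) (Finset.card_image_le (f := mapT))
            intro q' hq'
            rw [Finset.mem_filter] at hq'
            obtain ⟨hq'm, hq'j⟩ := hq'
            obtain ⟨q0, hq0, rfl⟩ := Finset.mem_image.1 hq'm
            obtain ⟨x, hx, hxe⟩ := hmemT2 q0 j hq'j
            have hxi : x = ⟨j, h⟩ := by apply Fin.ext; show (x:ℕ) = (j:ℕ); omega
            refine Finset.mem_image_of_mem _ (Finset.mem_filter.2 ⟨hq0, ?_⟩)
            rw [← hxi]; exact hx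
          · rename_i h
            unfold colVal
            rw [Nat.le_zero, Finset.card_eq_zero, Finset.filter_eq_empty_iff]
            intro q' hq'
            obtain ⟨q0, hq0, rfl⟩ := Finset.mem_image.1 hq'
            intro hq'j
            obtain ⟨x, hx, hxe⟩ := hmemT2 q0 j hq'j
            have : (x : ℕ) < p := x.2
            omega
        have hB : colVal (Fb.image mapB) j ≤
            if h : p + 1 ≤ (j:ℕ) then colVal Fb ⟨(j:ℕ) - (p+1), by omega⟩ else 0 := by
          split
          · rename_i h
            unfold colVal
            apply le_trans (Finset.card_le_card ?_) (Finset.card_image_le (f := mapB))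
            intro q' hq'
            rw [Finset.mem_filter] at hq'
            obtain ⟨hq'm, hq'j⟩ := hq'
            obtain ⟨q0, hq0, rfl⟩ := Finset.mem_image.1 hq'm
            obtain ⟨x, hx, hxe⟩ := hmemB2 q0 j hq'j
            have hxi : x = ⟨(j:ℕ) - (p+1), by omega⟩ := by
              apply Fin.ext; show (x:ℕ) = (j:ℕ) - (p+1); omega
            refine Finset.mem_image_of_mem _ (Finset.mem_filter.2 ⟨hq0, ?_⟩)
            rw [← hxi]; exact hx
          · rename_i h
            unfold colVal
            rw [Nat.le_zero, Finset.card_eq_zero, Finset.filter_eq_empty_iff]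
            intro q' hq'
            obtain ⟨q0, hq0, rfl⟩ := Finset.mem_image.1 hq'
            intro hq'j
            obtain ⟨x, hx, hxe⟩ := hmemB2 q0 j hq'j
            omega
        have hbigcol : (if j ∈ big.2 then 1 else 0) = if (j:ℕ) ≤ p then 1 else 0 := by
          rw [hbig]; simp
        rw [hF]
        refine le_trans hins ?_
        rw [hbigcol]
        by_cases h1 : (j : ℕ) < p
        · have := hFts ⟨j, h1⟩
          simp only [dif_pos h1] at hT
          simp only [dif_neg (by omega : ¬ (p + 1 ≤ (j:ℕ)))] at hB
          rw [if_pos (by omega)]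
          omega
        · by_cases h2 : p + 1 ≤ (j : ℕ)
          · have := hFbs ⟨(j:ℕ) - (p+1), by omega⟩
            simp only [dif_neg h1] at hT
            simp only [dif_pos h2] at hB
            rw [if_neg (by omega)]
            omega
          · simp only [dif_neg h1] at hT
            simp only [dif_neg h2] at hB
            rw [if_pos (by omega)]
            omega

lemma cb_upper : ∀ k : ℕ, (Nat.centralBinom k)^2 * (2*k+1) ≤ 16^k := by
  intro k
  induction k with
  | zero => simp [Nat.centralBinom]
  | succ k IH =>
    have hrec := Nat.succ_mul_centralBinom_succ k
    have hpos : 0 < (k+1)^2 := by positivity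
    apply Nat.le_of_mul_le_mul_left _ hpos
    calc (k+1)^2 * ((Nat.centralBinom (k+1))^2 * (2*(k+1)+1))
        = ((k+1) * Nat.centralBinom (k+1))^2 * (2*k+3) := by ring
      _ = (2*(2*k+1) * Nat.centralBinom k)^2 * (2*k+3) := by rw [hrec]
      _ = (4*(2*k+1)*(2*k+3)) * ((Nat.centralBinom k)^2 * (2*k+1)) := by ring
      _ ≤ (4*(2*k+1)*(2*k+3)) * 16^k := Nat.mul_le_mul_left _ IH
      _ ≤ (16*(k+1)^2) * 16^k := Nat.mul_le_mul_right _ (by nlinarith)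
      _ = (k+1)^2 * 16^(k+1) := by ring
lemma cb_lower : ∀ k : ℕ, 1 ≤ k → 16^k ≤ (Nat.centralBinom k)^2 * (4*k) := by
  intro k hk
  induction k with
  | zero => omega
  | succ k IH =>
    rcases Nat.eq_zero_or_pos k with rfl | hkpos
    · decide
    · have IH' := IH hkpos
      have hrec := Nat.succ_mul_centralBinom_succ k
      have hpos : 0 < (k+1)^2 := by positivity
      apply Nat.le_of_mul_le_mul_left _ hpos
      calc (k+1)^2 * 16^(k+1)
          = (16*(k+1)^2) * 16^k := by ring
        _ ≤ (16*(k+1)^2) * ((Nat.centralBinom k)^2 * (4*k)) := Nat.mul_le_mul_left _ IH'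
        _ = (4*k*(k+1)) * ((Nat.centralBinom k)^2 * (16 * (k+1))) := by ring
        _ ≤ ((2*k+1)^2) * ((Nat.centralBinom k)^2 * (16 * (k+1))) :=
            Nat.mul_le_mul_right _ (by nlinarith)
        _ = ((2*(2*k+1) * Nat.centralBinom k)^2) * (4*(k+1)) := by ring
        _ = ((k+1) * Nat.centralBinom (k+1))^2 * (4*(k+1)) := by rw [hrec]
        _ = (k+1)^2 * ((Nat.centralBinom (k+1))^2 * (4*(k+1))) := by ring

lemma cover_card_bound {n r s : ℕ} (F : Finset (Finset (Fin n) × Finset (Fin n)))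
    (hF : TriCover n F) (hr : ∀ i, rowVal F i ≤ r) (hs : ∀ j, colVal F j ≤ s) :
    n ≤ (s + r).choose s + 1 := by
  classical
  rcases Nat.lt_or_ge n 2 with hn | hn
  · have : 0 < (s + r).choose s := Nat.choose_pos (by omega)
    omega
  · set N := n - 1 with hN
    have hNn : ∀ x : Fin N, (x : ℕ) < n := fun x => by have := x.2; omega
    have hNn' : ∀ x : Fin N, (x : ℕ) + 1 < n := fun x => by have := x.2; omega
    set enc : (Finset (Fin n) × Finset (Fin n)) → ℕ := Encodable.encode with henc
    have hencinj : Function.Injective enc := Encodable.encode_injective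
    set A : Fin N → Finset ℕ :=
      fun j => (F.filter (fun p => (⟨(j:ℕ)+1, hNn' j⟩ : Fin n) ∈ p.2)).image enc with hA
    set B : Fin N → Finset ℕ :=
      fun i => (F.filter (fun p => (⟨(i:ℕ), hNn i⟩ : Fin n) ∈ p.1)).image enc with hB
    have key : N ≤ (s + r).choose s := by
      apply skew_bollobas A B
      · intro j
        exact le_trans (Finset.card_image_le) (hs _)
      · intro i
        exact le_trans (Finset.card_image_le) (hr _)
      · intro i
        rw [Finset.disjoint_left]
        intro x hxA hxB
        obtain ⟨p, hp, rfl⟩ := Finset.mem_image.1 hxA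
        obtain ⟨q, hq, hqe⟩ := Finset.mem_image.1 hxB
        have : q = p := hencinj hqe
        subst this
        have h1 := (Finset.mem_filter.1 hp).2
        have h2 := (Finset.mem_filter.1 hq).2
        have := hF.1 q (Finset.mem_filter.1 hp).1 _ h2 _ h1
        simp at this
      · intro i j hij
        have hle : ((j:ℕ)+1) ≤ (i:ℕ) := hij
        obtain ⟨p, hp, hpi, hpj⟩ := hF.2 ⟨(i:ℕ), hNn i⟩ ⟨(j:ℕ)+1, hNn' j⟩ hle
        refine ⟨enc p, Finset.mem_inter.2 ⟨?_, ?_⟩⟩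
        · exact Finset.mem_image_of_mem _ (Finset.mem_filter.2 ⟨hp, hpj⟩)
        · exact Finset.mem_image_of_mem _ (Finset.mem_filter.2 ⟨hp, hpi⟩)
    omega

lemma lrB_mem (n : ℕ) : ∃ F : Finset (Finset (Fin n) × Finset (Fin n)), TriCover n F ∧
    (∀ i : Fin n, rowVal F i ≤ lrB n) ∧ ∀ j : Fin n, colVal F j ≤ lrB n := by
  classical
  have hne : {k | ∃ F : Finset (Finset (Fin n) × Finset (Fin n)), TriCover n F ∧
      (∀ i : Fin n, rowVal F i ≤ k) ∧ ∀ j : Fin n, colVal F j ≤ k}.Nonempty := by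
    set F0 : Finset (Finset (Fin n) × Finset (Fin n)) :=
      (Finset.univ.filter (fun ij : Fin n × Fin n => (ij.2 : ℕ) ≤ (ij.1 : ℕ))).image
        (fun ij => ({ij.1}, {ij.2})) with hF0
    refine ⟨Fintype.card (Finset (Fin n) × Finset (Fin n)), F0, ⟨?_, ?_⟩, ?_, ?_⟩
    · intro p hp i hi j hj
      obtain ⟨ij, hij, rfl⟩ := Finset.mem_image.1 hp
      simp only [Finset.mem_singleton] at hi hj
      subst hi; subst hj
      exact (Finset.mem_filter.1 hij).2
    · intro i j hij
      refine ⟨({i}, {j}), ?_, by simp, by simp⟩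
      exact Finset.mem_image_of_mem (fun ij : Fin n × Fin n => ({ij.1}, {ij.2}))
        (Finset.mem_filter.2 ⟨Finset.mem_univ (i, j), hij⟩)
    · intro i
      exact le_trans (Finset.card_filter_le _ _) (Finset.card_le_univ _)
    · intro j
      exact le_trans (Finset.card_filter_le _ _) (Finset.card_le_univ _)
  exact Nat.sInf_mem hne

lemma lrB_le {n k : ℕ} (h : n + 1 ≤ (2*k).choose k) : lrB n ≤ k := by
  apply Nat.sInf_le
  have h2 : 2*k = k + k := by omega
  obtain ⟨F, h1, h2, h3⟩ := exists_cover n k k (by rw [h2] at h; exact h)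
  exact ⟨F, h1, h2, h3⟩

lemma lrB_lower_bound {n : ℕ} (hn : 1 ≤ n) :
    (n - 1)^2 * (2 * lrB n + 1) ≤ 16 ^ (lrB n) := by
  obtain ⟨F, h1, h2, h3⟩ := lrB_mem n
  have := cover_card_bound F h1 h2 h3
  set K := lrB n
  have hnK : n - 1 ≤ Nat.centralBinom K := by
    have : (K + K).choose K = Nat.centralBinom K := by
      unfold Nat.centralBinom
      congr 1
      omega
    omega
  calc (n-1)^2 * (2*K+1) ≤ (Nat.centralBinom K)^2 * (2*K+1) := by
        apply Nat.mul_le_mul_right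
        exact Nat.pow_le_pow_left hnK 2
    _ ≤ 16^K := cb_upper K

lemma lrB_pos {n : ℕ} (hn : 1 ≤ n) : 1 ≤ lrB n := by
  obtain ⟨F, h1, h2, _⟩ := lrB_mem n
  have h0 : (0 : ℕ) < n := hn
  obtain ⟨p, hp, hpi, _⟩ := h1.2 ⟨0, h0⟩ ⟨0, h0⟩ le_rfl
  have : 0 < rowVal F ⟨0, h0⟩ := Finset.card_pos.2 ⟨p, Finset.mem_filter.2 ⟨hp, hpi⟩⟩
  have := h2 ⟨0, h0⟩
  omega

open Real

lemma logb_two_two : Real.logb 2 2 = 1 := Real.logb_self_eq_one one_lt_two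

lemma logb_two_pow (m : ℕ) : Real.logb 2 ((2:ℝ)^m) = m := by
  rw [Real.logb_pow, logb_two_two, mul_one]

lemma logb_16_pow (m : ℕ) : Real.logb 2 ((16:ℝ)^m) = 4*m := by
  rw [show (16:ℝ) = 2^(4:ℕ) by norm_num, ← pow_mul, logb_two_pow]
  push_cast; ring


theorem stmt17 : ∃ c₁ c₂ : ℝ, ∀ n : ℕ, 2 ≤ n →
    (1 / 2 : ℝ) * Real.logb 2 (n : ℝ) +
        (1 / 4 : ℝ) * Real.logb 2 (Real.logb 2 (n : ℝ)) - c₁ ≤ (lrB n : ℝ) ∧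
      (lrB n : ℝ) ≤ (1 / 2 : ℝ) * Real.logb 2 (n : ℝ) +
        (1 / 4 : ℝ) * Real.logb 2 (Real.logb 2 (n : ℝ)) + c₂ := by
  refine ⟨1/2, 4, ?_⟩
  intro n hn
  have hn1 : (1:ℝ) ≤ (n:ℝ) - 1 := by
    have : (2:ℝ) ≤ (n:ℝ) := by exact_mod_cast hn
    linarith
  have hnpos : (0:ℝ) < (n:ℝ) := by linarith
  have hn1pos : (0:ℝ) < (n:ℝ) - 1 := by linarith
  have hLn1 : 1 ≤ Real.logb 2 (n:ℝ) := by
    rw [← logb_two_two]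
    exact (Real.logb_le_logb one_lt_two two_pos hnpos).2 (by exact_mod_cast hn)
  have hLnpos : 0 < Real.logb 2 (n:ℝ) := by linarith
  have hLLn0 : 0 ≤ Real.logb 2 (Real.logb 2 (n:ℝ)) := Real.logb_nonneg one_lt_two hLn1
  have hLn_le : Real.logb 2 (n:ℝ) ≤ (n:ℝ) := by
    have h2 : (n:ℝ) ≤ (2:ℝ)^n := by
      have h3 : n < 2 ^ n := Nat.lt_two_pow_self
      have h4 : (n:ℝ) < ((2^n : ℕ) : ℝ) := by exact_mod_cast h3
      push_cast at h4
      linarith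
    calc Real.logb 2 (n:ℝ) ≤ Real.logb 2 ((2:ℝ)^n) :=
          (Real.logb_le_logb one_lt_two hnpos (by positivity)).2 h2
      _ = n := logb_two_pow n
  have hLLn_le : Real.logb 2 (Real.logb 2 (n:ℝ)) ≤ Real.logb 2 (n:ℝ) :=
    (Real.logb_le_logb one_lt_two hLnpos hnpos).2 hLn_le
  constructor
  · -- lower bound
    obtain ⟨K, hK⟩ : ∃ K : ℕ, K = lrB n := ⟨_, rfl⟩
    rw [← hK]
    have hK1 : 1 ≤ K := hK ▸ lrB_pos (by omega : 1 ≤ n)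
    have hKpos : (0:ℝ) < 2*(K:ℝ)+1 := by positivity
    have h1 : ((n:ℝ)-1)^2 * (2*(K:ℝ)+1) ≤ (16:ℝ)^K := by
      have hnat := lrB_lower_bound (n := n) (by omega : 1 ≤ n)
      rw [← hK] at hnat
      have hcast : (((n-1)^2 * (2*K+1) : ℕ) : ℝ) ≤ ((16^K : ℕ) : ℝ) := by exact_mod_cast hnat
      push_cast [Nat.cast_sub (by omega : 1 ≤ n)] at hcast
      convert hcast using 2 <;> push_cast <;> ring
    have hlog1 : 2 * Real.logb 2 ((n:ℝ)-1) + Real.logb 2 (2*(K:ℝ)+1) ≤ 4*(K:ℝ) := by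
      have hm : Real.logb 2 (((n:ℝ)-1)^2 * (2*(K:ℝ)+1)) ≤ Real.logb 2 ((16:ℝ)^K) :=
        (Real.logb_le_logb one_lt_two (by positivity) (by positivity)).2 h1
      rw [Real.logb_mul (by positivity) (by positivity)] at hm
      rw [show ((n:ℝ)-1)^2 = ((n:ℝ)-1)^(2:ℕ) by norm_num, Real.logb_pow] at hm
      rw [logb_16_pow] at hm
      push_cast at hm ⊢
      linarith
    have h2 : Real.logb 2 ((n:ℝ)-1) ≤ 2*(K:ℝ) := by
      have ha : 0 ≤ Real.logb 2 (2*(K:ℝ)+1) :=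
        Real.logb_nonneg one_lt_two (by push_cast; nlinarith [hK1])
      have hb : 0 ≤ Real.logb 2 ((n:ℝ)-1) := Real.logb_nonneg one_lt_two hn1
      linarith
    have h3 : Real.logb 2 (n:ℝ) ≤ Real.logb 2 ((n:ℝ)-1) + 1 := by
      have hle : (n:ℝ) ≤ 2*((n:ℝ)-1) := by linarith
      calc Real.logb 2 (n:ℝ) ≤ Real.logb 2 (2*((n:ℝ)-1)) :=
            (Real.logb_le_logb one_lt_two hnpos (by positivity)).2 hle
        _ = Real.logb 2 2 + Real.logb 2 ((n:ℝ)-1) := Real.logb_mul (by norm_num) (by positivity)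
        _ = Real.logb 2 ((n:ℝ)-1) + 1 := by rw [logb_two_two]; ring
    have h4 : Real.logb 2 (n:ℝ) ≤ 2*(K:ℝ)+1 := by linarith
    have h5 : Real.logb 2 (Real.logb 2 (n:ℝ)) ≤ Real.logb 2 (2*(K:ℝ)+1) :=
      (Real.logb_le_logb one_lt_two hLnpos hKpos).2 h4
    linarith
  · -- upper bound
    obtain ⟨x, hx⟩ : ∃ x : ℝ,
      x = (1/2) * Real.logb 2 (n:ℝ) + (1/4) * Real.logb 2 (Real.logb 2 (n:ℝ)) := ⟨_, rfl⟩
    rw [← hx]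
    have hx0 : 0 ≤ x := by rw [hx]; positivity
    obtain ⟨k, hk⟩ : ∃ k : ℕ, k = ⌈x⌉₊ + 3 := ⟨_, rfl⟩
    have hk1 : 1 ≤ k := by omega
    have hkxl : x + 3 ≤ (k:ℝ) := by
      have := Nat.le_ceil x
      rw [hk]; push_cast
      linarith
    have hkxu : (k:ℝ) ≤ x + 4 := by
      have := Nat.ceil_lt_add_one hx0
      rw [hk]; push_cast
      linarith
    have hkpos : (0:ℝ) < k := by linarith
    have hkLn : (k:ℝ) ≤ 8 * Real.logb 2 (n:ℝ) := by
      have hxb : x ≤ (3/4) * Real.logb 2 (n:ℝ) := by rw [hx]; linarith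
      linarith
    have hLk : Real.logb 2 (k:ℝ) ≤ 3 + Real.logb 2 (Real.logb 2 (n:ℝ)) := by
      calc Real.logb 2 (k:ℝ) ≤ Real.logb 2 (8 * Real.logb 2 (n:ℝ)) :=
            (Real.logb_le_logb one_lt_two hkpos (by positivity)).2 hkLn
        _ = Real.logb 2 8 + Real.logb 2 (Real.logb 2 (n:ℝ)) :=
            Real.logb_mul (by norm_num) (by positivity)
        _ = 3 + Real.logb 2 (Real.logb 2 (n:ℝ)) := by
            rw [show (8:ℝ) = 2^(3:ℕ) by norm_num, logb_two_pow]; norm_num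
    have hLn1' : Real.logb 2 ((n:ℝ)+1) ≤ Real.logb 2 (n:ℝ) + 1 := by
      have hle : (n:ℝ)+1 ≤ 2*(n:ℝ) := by linarith
      calc Real.logb 2 ((n:ℝ)+1) ≤ Real.logb 2 (2*(n:ℝ)) :=
            (Real.logb_le_logb one_lt_two (by linarith) (by positivity)).2 hle
        _ = Real.logb 2 2 + Real.logb 2 (n:ℝ) := Real.logb_mul (by norm_num) (by positivity)
        _ = Real.logb 2 (n:ℝ) + 1 := by rw [logb_two_two]; ring
    have hA : ((n:ℝ)+1)^2 * (4*(k:ℝ)) ≤ (16:ℝ)^k := by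
      have hApos : (0:ℝ) < ((n:ℝ)+1)^2 * (4*(k:ℝ)) := by positivity
      have hlogA : Real.logb 2 (((n:ℝ)+1)^2 * (4*(k:ℝ))) ≤ 4*(k:ℝ) := by
        rw [Real.logb_mul (by positivity) (by positivity),
          show ((n:ℝ)+1)^2 = ((n:ℝ)+1)^(2:ℕ) by norm_num, Real.logb_pow,
          Real.logb_mul (by norm_num) (by positivity),
          show (4:ℝ) = 2^(2:ℕ) by norm_num, logb_two_pow]
        have h12 : 4 * x + 12 ≤ 4 * (k:ℝ) := by linarith
        rw [hx] at h12
        push_cast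
        linarith
      calc ((n:ℝ)+1)^2 * (4*(k:ℝ)) = (2:ℝ) ^ (Real.logb 2 (((n:ℝ)+1)^2 * (4*(k:ℝ)))) := by
            rw [Real.rpow_logb two_pos (by norm_num) hApos]
        _ ≤ (2:ℝ) ^ (4*(k:ℝ)) := Real.rpow_le_rpow_of_exponent_le (by norm_num) hlogA
        _ = (16:ℝ)^k := by
            rw [show (4*(k:ℝ)) = ((4*k : ℕ) : ℝ) by push_cast; ring, Real.rpow_natCast,
              show (16:ℝ) = 2^(4:ℕ) by norm_num, ← pow_mul]
    have hAnat : (n+1)^2 * (4*k) ≤ 16^k := by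
      have hc : (((n+1)^2 * (4*k) : ℕ) : ℝ) ≤ ((16^k : ℕ) : ℝ) := by
        push_cast
        convert hA using 2 <;> push_cast <;> ring
      exact_mod_cast hc
    have hcb := cb_lower k hk1
    have hsq : (n+1)^2 ≤ (Nat.centralBinom k)^2 := by
      have h4k : 0 < 4*k := by omega
      apply Nat.le_of_mul_le_mul_right _ h4k
      calc (n+1)^2 * (4*k) ≤ 16^k := hAnat
        _ ≤ (Nat.centralBinom k)^2 * (4*k) := hcb
    have hle : n + 1 ≤ Nat.centralBinom k := by
      by_contra h
      push_neg at h
      have := Nat.pow_lt_pow_left h (two_ne_zero)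
      omega
    have hfin : lrB n ≤ k := lrB_le (by unfold Nat.centralBinom at hle; exact hle)
    have hcast : (lrB n : ℝ) ≤ (k : ℝ) := by exact_mod_cast hfin
    rw [hx] at hkxu
    linarith
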